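/- arXiv:1401.2711 — 5 statements merged into one kernel-verified Lean document; each statement's English description precedes it below -/
import Mathlib

section
/- Suppose ω_{i_{k+1} i_k} = 1 for all k = 1,…,n−1. Then the matrix Ω_{i_n} Ω_{i_{n-1}} ⋯ Ω_{i_1} has a nonzero diagonal entry if and only if ω_{i_1 i_n} = 1, and in that case the unique nonzero diagonal entry is at position (i_1, i_1). -/
open Matrix Filter
open scoped Kronecker

/-- `seqProd A n = A (n-1) * ⋯ * A 1 * A 0`. -/
def seqProd {α : Type*} [Monoid α] (A : ℕ → α) (n : ℕ) : α :=
  ((List.range n).reverse.map A).prod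

/-- The matrix `Ω_i = ω_i^T δ_i`: outer product of the `i`-th column of `ω`
with the `i`-th standard basis row vector. -/
def OmegaM {N : ℕ} (ω : Matrix (Fin N) (Fin N) ℂ) (i : Fin N) :
    Matrix (Fin N) (Fin N) ℂ :=
  vecMulVec (fun j => ω j i) (fun k => if k = i then 1 else 0)

/-- Ω-admissibility of the finite sequence `i 0, …, i (n-1)`. -/
def Adm {N : ℕ} (ω : Matrix (Fin N) (Fin N) ℂ) (i : ℕ → Fin N) (n : ℕ) : Prop :=
  (∀ k, k + 1 < n → ω (i (k + 1)) (i k) = 1) ∧ ∃ j, ω j (i (n - 1)) = 1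

/-- Ω-admissible and periodically extendable. -/
def PerAdm {N : ℕ} (ω : Matrix (Fin N) (Fin N) ℂ) (i : ℕ → Fin N) (n : ℕ) : Prop :=
  Adm ω i n ∧ ω (i 0) (i (n - 1)) = 1

/-- Only the consecutive-transition condition (the set `W⁰`). -/
def AdmZero {N : ℕ} (ω : Matrix (Fin N) (Fin N) ℂ) (i : ℕ → Fin N) (n : ℕ) : Prop :=
  ∀ k, k + 1 < n → ω (i (k + 1)) (i k) = 1

/-- Extendability to an infinite admissible sequence (the set `W^∞`). -/
def AdmInf {N : ℕ} (ω : Matrix (Fin N) (Fin N) ℂ) (i : ℕ → Fin N) (n : ℕ) : Prop :=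
  ∃ j : ℕ → Fin N, (∀ k, k < n → j k = i k) ∧ ∀ k, ω (j (k + 1)) (j k) = 1

/-- The norm `|||M||| = max_i Σ_j ‖m_{ij}‖` on `N × N` block matrices with `d × d` blocks. -/
noncomputable def blockNorm {N d : ℕ} (nrm : Matrix (Fin d) (Fin d) ℂ → ℝ)
    (M : Matrix (Fin N × Fin d) (Fin N × Fin d) ℂ) : ℝ :=
  ⨆ i : Fin N, ∑ j : Fin N, nrm (Matrix.of fun a b => M (i, a) (j, b))

/-- The lifted matrix `A^{(i)} = Ω_i ⊗ A_i`. -/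
def liftA {N d : ℕ} (ω : Matrix (Fin N) (Fin N) ℂ)
    (A : Fin N → Matrix (Fin d) (Fin d) ℂ) (i : Fin N) :
    Matrix (Fin N × Fin d) (Fin N × Fin d) ℂ :=
  OmegaM ω i ⊗ₖ A i

/-- Spectral radius of a complex matrix, as a real number. -/
noncomputable def sprad {m : Type*} [Fintype m] [DecidableEq m] (M : Matrix m m ℂ) : ℝ :=
  (spectralRadius ℂ M).toReal

/-- `ρ_n(𝒜, Ω)`. -/
noncomputable def rhoMark {N d : ℕ} (nrm : Matrix (Fin d) (Fin d) ℂ → ℝ)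
    (ω : Matrix (Fin N) (Fin N) ℂ) (A : Fin N → Matrix (Fin d) (Fin d) ℂ) (n : ℕ) : ℝ :=
  sSup {x : ℝ | ∃ i : ℕ → Fin N, Adm ω i n ∧
    x = nrm (seqProd (fun k => A (i k)) n) ^ ((1 : ℝ) / n)}

/-- `ρ^{(per)}_n(𝒜, Ω)`. -/
noncomputable def rhoPerMark {N d : ℕ} (nrm : Matrix (Fin d) (Fin d) ℂ → ℝ)
    (ω : Matrix (Fin N) (Fin N) ℂ) (A : Fin N → Matrix (Fin d) (Fin d) ℂ) (n : ℕ) : ℝ :=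
  sSup {x : ℝ | ∃ i : ℕ → Fin N, PerAdm ω i n ∧
    x = nrm (seqProd (fun k => A (i k)) n) ^ ((1 : ℝ) / n)}

/-- `ρ^{(0)}_n(𝒜, Ω)`. -/
noncomputable def rhoZeroMark {N d : ℕ} (nrm : Matrix (Fin d) (Fin d) ℂ → ℝ)
    (ω : Matrix (Fin N) (Fin N) ℂ) (A : Fin N → Matrix (Fin d) (Fin d) ℂ) (n : ℕ) : ℝ :=
  sSup {x : ℝ | ∃ i : ℕ → Fin N, AdmZero ω i n ∧
    x = nrm (seqProd (fun k => A (i k)) n) ^ ((1 : ℝ) / n)}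

/-- `ρ^{(∞)}_n(𝒜, Ω)`. -/
noncomputable def rhoInfMark {N d : ℕ} (nrm : Matrix (Fin d) (Fin d) ℂ → ℝ)
    (ω : Matrix (Fin N) (Fin N) ℂ) (A : Fin N → Matrix (Fin d) (Fin d) ℂ) (n : ℕ) : ℝ :=
  sSup {x : ℝ | ∃ i : ℕ → Fin N, AdmInf ω i n ∧
    x = nrm (seqProd (fun k => A (i k)) n) ^ ((1 : ℝ) / n)}

/-- `ρ̂_n(𝒜, Ω)`. -/
noncomputable def rhoHatMark {N d : ℕ} (ω : Matrix (Fin N) (Fin N) ℂ)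
    (A : Fin N → Matrix (Fin d) (Fin d) ℂ) (n : ℕ) : ℝ :=
  sSup {x : ℝ | ∃ i : ℕ → Fin N, Adm ω i n ∧
    x = sprad (seqProd (fun k => A (i k)) n) ^ ((1 : ℝ) / n)}

/-- `ρ̂^{(per)}_n(𝒜, Ω)`. -/
noncomputable def rhoHatPerMark {N d : ℕ} (ω : Matrix (Fin N) (Fin N) ℂ)
    (A : Fin N → Matrix (Fin d) (Fin d) ℂ) (n : ℕ) : ℝ :=
  sSup {x : ℝ | ∃ i : ℕ → Fin N, PerAdm ω i n ∧
    x = sprad (seqProd (fun k => A (i k)) n) ^ ((1 : ℝ) / n)}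

lemma seqProd_succ {α : Type*} [Monoid α] (A : ℕ → α) (n : ℕ) :
    seqProd A (n + 1) = A n * seqProd A n := by
  simp [seqProd, List.range_succ]

lemma seqProd_omega {N : ℕ} (ω : Matrix (Fin N) (Fin N) ℂ) (i : ℕ → Fin N) (n : ℕ)
    (hn : 1 ≤ n) (hadm : ∀ k, k + 1 < n → ω (i (k + 1)) (i k) = 1) :
    seqProd (fun k => OmegaM ω (i k)) n =
      vecMulVec (fun j => ω j (i (n - 1))) (fun k => if k = i 0 then 1 else 0) := by
  induction n with
  | zero => omega
  | succ n ih =>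
    rcases Nat.eq_or_lt_of_le hn with h | h
    · obtain rfl : n = 0 := by omega
      simp [seqProd, OmegaM, List.range_succ]
    · have hn' : 1 ≤ n := by omega
      rw [seqProd_succ, ih hn' (fun k hk => hadm k (by omega))]
      have hstep : ω (i n) (i (n - 1)) = 1 := by
        have := hadm (n - 1) (by omega)
        rwa [Nat.sub_add_cancel hn'] at this
      ext j k
      simp only [OmegaM, Matrix.mul_apply, vecMulVec_apply, Nat.add_sub_cancel]
      rw [Finset.sum_eq_single (i n)]
      · simp [hstep]
      · intro b _ hb; simp [hb]
      · simp

theorem stmt2 {N : ℕ} (ω : Matrix (Fin N) (Fin N) ℂ)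
    (hω : ∀ a b, ω a b = 0 ∨ ω a b = 1) (i : ℕ → Fin N) (n : ℕ) (hn : 1 ≤ n)
    (hadm : ∀ k, k + 1 < n → ω (i (k + 1)) (i k) = 1) :
    ((∃ j, seqProd (fun k => OmegaM ω (i k)) n j j ≠ 0) ↔ ω (i 0) (i (n - 1)) = 1) ∧
    (ω (i 0) (i (n - 1)) = 1 →
      ∀ j, seqProd (fun k => OmegaM ω (i k)) n j j ≠ 0 ↔ j = i 0) := by
  rw [seqProd_omega ω i n hn hadm]
  constructor
  · constructor
    · rintro ⟨j, hj⟩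
      simp only [vecMulVec_apply, ne_eq, mul_ite, mul_one, mul_zero] at hj
      by_cases hji : j = i 0
      · subst hji
        simp only [if_pos rfl] at hj
        rcases hω (i 0) (i (n - 1)) with h | h
        · exact absurd h hj
        · exact h
      · simp [hji] at hj
    · intro h
      exact ⟨i 0, by simp [vecMulVec_apply, h]⟩
  · intro h j
    by_cases hji : j = i 0 <;> simp [vecMulVec_apply, hji, h]
end

section
/- If the sequence (i_1,…,i_n) is Ω-admissible, then A^{(i_n)} ⋯ A^{(i_1)} = (ω_{i_n}^T δ_{i_1}) ⊗ (A_{i_n} ⋯ A_{i_1}), a block matrix whose nonzero blocks all lie in the i_1-th block column and each equal A_{i_n} ⋯ A_{i_1}; consequently |||A^{(i_n)} ⋯ A^{(i_1)}||| = ‖A_{i_n} ⋯ A_{i_1}‖. -/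
open Matrix Filter
open scoped Kronecker

lemma omegaM_mul_vecMulVec {N : ℕ} (ω : Matrix (Fin N) (Fin N) ℂ) (a m i0 : Fin N)
    (h : ω a m = 1) :
    OmegaM ω a * vecMulVec (fun j => ω j m) (fun k => if k = i0 then 1 else 0)
      = vecMulVec (fun j => ω j a) (fun k => if k = i0 then 1 else 0) := by
  ext p q
  simp only [mul_apply, OmegaM, vecMulVec_apply]
  rw [Finset.sum_eq_single a]
  · simp [h]
  · intro b _ hb; simp [hb]
  · simp

lemma key {N d : ℕ} (ω : Matrix (Fin N) (Fin N) ℂ)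
    (A : Fin N → Matrix (Fin d) (Fin d) ℂ) (i : ℕ → Fin N) (n : ℕ) (hn : 1 ≤ n)
    (h : ∀ k, k + 1 < n → ω (i (k + 1)) (i k) = 1) :
    seqProd (fun k => liftA ω A (i k)) n =
      (vecMulVec (fun j => ω j (i (n - 1))) (fun k => if k = i 0 then 1 else 0)) ⊗ₖ
        seqProd (fun k => A (i k)) n := by
  induction n with
  | zero => omega
  | succ m ih =>
    rcases Nat.eq_or_lt_of_le hn with h1 | h1
    · have hm0 : m = 0 := by omega
      subst hm0
      simp [seqProd, liftA, OmegaM, List.range_succ]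
    · have hm : 1 ≤ m := by omega
      rw [seqProd_succ, seqProd_succ, ih hm (fun k hk => h k (by omega)),
        liftA, ← mul_kronecker_mul]
      have hmm : m - 1 + 1 = m := by omega
      rw [Nat.add_sub_cancel, omegaM_mul_vecMulVec ω (i m) (i (m-1)) (i 0)
        (by rw [← hmm]; exact h (m-1) (by omega))]

lemma normpart {N d : ℕ} (nrm : Matrix (Fin d) (Fin d) ℂ → ℝ)
    (hnn : ∀ M, 0 ≤ nrm M)
    (hsmul : ∀ (c : ℂ) M, nrm (c • M) = ‖c‖ * nrm M)
    (u : Fin N → ℂ) (hu : ∀ a, u a = 0 ∨ u a = 1) (j : Fin N) (hj : u j = 1)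
    (i0 : Fin N) (P : Matrix (Fin d) (Fin d) ℂ) :
    blockNorm nrm ((vecMulVec u (fun k => if k = i0 then 1 else 0)) ⊗ₖ P) = nrm P := by
  have hblock : ∀ a b : Fin N,
      (Matrix.of fun x y =>
        ((vecMulVec u (fun k => if k = i0 then (1:ℂ) else 0)) ⊗ₖ P) (a, x) (b, y))
      = (u a * if b = i0 then 1 else 0) • P := by
    intro a b; ext x y
    simp [kroneckerMap_apply, vecMulVec_apply, mul_assoc]
  have hrow : ∀ a : Fin N,
      (∑ b : Fin N, nrm (Matrix.of fun x y =>
        ((vecMulVec u (fun k => if k = i0 then (1:ℂ) else 0)) ⊗ₖ P) (a, x) (b, y)))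
      = ‖u a‖ * nrm P := by
    intro a
    rw [Finset.sum_eq_single i0]
    · rw [hblock, if_pos rfl, mul_one, hsmul]
    · intro b _ hb
      rw [hblock, if_neg hb, mul_zero, hsmul]
      simp
    · simp
  have hle : ∀ a, ‖u a‖ * nrm P ≤ nrm P := by
    intro a
    rcases hu a with h | h <;> simp [h, hnn P]
  have : Nonempty (Fin N) := ⟨j⟩
  unfold blockNorm
  simp only [hrow]
  apply le_antisymm
  · exact ciSup_le hle
  · have := le_ciSup (f := fun a => ‖u a‖ * nrm P) (Set.Finite.bddAbove (Set.finite_range _)) j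
    rwa [hj, norm_one, one_mul] at this

theorem stmt5 {N d : ℕ} (ω : Matrix (Fin N) (Fin N) ℂ)
    (hω : ∀ a b, ω a b = 0 ∨ ω a b = 1) (nrm : Matrix (Fin d) (Fin d) ℂ → ℝ)
    (hnn : ∀ M, 0 ≤ nrm M) (hdef : ∀ M, nrm M = 0 ↔ M = 0)
    (hadd : ∀ M₁ M₂, nrm (M₁ + M₂) ≤ nrm M₁ + nrm M₂)
    (hsmul : ∀ (c : ℂ) M, nrm (c • M) = ‖c‖ * nrm M)
    (hmul : ∀ M₁ M₂, nrm (M₁ * M₂) ≤ nrm M₁ * nrm M₂)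
    (A : Fin N → Matrix (Fin d) (Fin d) ℂ) (i : ℕ → Fin N) (n : ℕ) (hn : 1 ≤ n)
    (hadm : Adm ω i n) :
    seqProd (fun k => liftA ω A (i k)) n =
      (vecMulVec (fun j => ω j (i (n - 1))) (fun k => if k = i 0 then 1 else 0)) ⊗ₖ
        seqProd (fun k => A (i k)) n ∧
    blockNorm nrm (seqProd (fun k => liftA ω A (i k)) n) =
      nrm (seqProd (fun k => A (i k)) n) := by
  obtain ⟨j, hj⟩ := hadm.2
  have h1 := key ω A i n hn hadm.1
  refine ⟨h1, ?_⟩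
  rw [h1]
  exact normpart nrm hnn hsmul _ (fun a => hω a (i (n-1))) j hj (i 0) _
end

section
/- For every n ≥ 1, ρ̂_n(𝒜_Ω) = ρ̂_n^{(per)}(𝒜, Ω): the supremum of ρ(A^{(i_n)} ⋯ A^{(i_1)})^{1/n} over all products of n matrices from the Ω-lift 𝒜_Ω equals the supremum of ρ(A_{i_n} ⋯ A_{i_1})^{1/n} over all Ω-admissible periodically extendable sequences (i_1,…,i_n), where ρ denotes the spectral radius. -/
open Matrix Filter
open scoped Kronecker

/- ### Auxiliary lemmas -/

lemma seqProd_zero {α : Type*} [Monoid α] (A : ℕ → α) : seqProd A 0 = 1 := rfl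

lemma seqProd_congr {α : Type*} [Monoid α] {A B : ℕ → α} {n : ℕ}
    (h : ∀ k, k < n → A k = B k) : seqProd A n = seqProd B n := by
  induction n with
  | zero => rfl
  | succ n ih =>
    rw [seqProd_succ, seqProd_succ, h n (Nat.lt_succ_self n),
      ih fun k hk => h k (hk.trans (Nat.lt_succ_self n))]

lemma seqProd_kron {N d : ℕ} (P : ℕ → Matrix (Fin N) (Fin N) ℂ)
    (B : ℕ → Matrix (Fin d) (Fin d) ℂ) (n : ℕ) :
    seqProd (fun k => P k ⊗ₖ B k) n = seqProd P n ⊗ₖ seqProd B n := by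
  induction n with
  | zero => simp [seqProd_zero, Matrix.one_kronecker_one]
  | succ n ih => rw [seqProd_succ, seqProd_succ, seqProd_succ, ih, Matrix.mul_kronecker_mul]

lemma vecMulVec_mul_vecMulVec' {N : ℕ} (u v u' v' : Fin N → ℂ) :
    vecMulVec u v * vecMulVec u' v' = (v ⬝ᵥ u') • vecMulVec u v' := by
  ext j k
  simp [Matrix.mul_apply, vecMulVec_apply, dotProduct, Finset.mul_sum, Finset.sum_mul]
  congr 1; ext m; ring

lemma seqProd_OmegaM {N : ℕ} (ω : Matrix (Fin N) (Fin N) ℂ) (i : ℕ → Fin N) (m : ℕ) :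
    seqProd (fun k => OmegaM ω (i k)) (m + 1) =
      (∏ k ∈ Finset.range m, ω (i (k + 1)) (i k)) •
        vecMulVec (fun j => ω j (i m)) (fun k => if k = i 0 then 1 else 0) := by
  induction m with
  | zero =>
    simp only [seqProd_succ, seqProd, Finset.range_zero, Finset.prod_empty, one_smul,
      OmegaM, List.range_succ, List.range_zero, List.nil_append, List.reverse_singleton,
      List.map_cons, List.map_nil, List.prod_cons, List.prod_nil, mul_one]
  | succ m ih =>
    rw [seqProd_succ, ih, mul_smul_comm, OmegaM, vecMulVec_mul_vecMulVec']
    have hdot : (fun k => if k = i (m + 1) then (1:ℂ) else 0) ⬝ᵥ (fun j => ω j (i m)) =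
        ω (i (m + 1)) (i m) := by
      simp [dotProduct, ite_mul]
    rw [hdot, smul_smul, mul_comm, Finset.prod_range_succ]
    rw [mul_comm]

lemma spectrum_subset_zero_of_sq_zero {m : Type*} [Fintype m] [DecidableEq m]
    (M : Matrix m m ℂ) (h : M * M = 0) : spectrum ℂ M ⊆ {0} := by
  intro k hk
  simp only [Set.mem_singleton_iff]
  by_contra hk0
  apply spectrum.notMem_iff.mpr ?_ hk
  have key : (algebraMap ℂ (Matrix m m ℂ) k - M) * (k⁻¹ • 1 + (k⁻¹ * k⁻¹) • M) = 1 := by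
    rw [Algebra.algebraMap_eq_smul_one]
    simp only [sub_mul, mul_add, smul_mul_assoc, Matrix.mul_smul, one_mul, mul_one, h, smul_zero]
    match_scalars <;> field_simp <;> ring
  have key2 : (k⁻¹ • 1 + (k⁻¹ * k⁻¹) • M) * (algebraMap ℂ (Matrix m m ℂ) k - M) = 1 := by
    rw [Algebra.algebraMap_eq_smul_one]
    simp only [mul_sub, add_mul, smul_mul_assoc, Matrix.mul_smul, one_mul, mul_one, h, smul_zero]
    match_scalars <;> field_simp <;> ring
  exact ⟨⟨_, _, key, key2⟩, rfl⟩

lemma sprad_eq_zero_of_sq_zero {m : Type*} [Fintype m] [DecidableEq m] (M : Matrix m m ℂ)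
    (h : M * M = 0) : sprad M = 0 := by
  have hsub := spectrum_subset_zero_of_sq_zero M h
  have : spectralRadius ℂ M ≤ 0 := by
    rw [spectralRadius]
    refine iSup₂_le fun k hk => ?_
    rw [Set.mem_singleton_iff.mp (hsub hk)]
    simp
  simp [sprad, le_zero_iff.mp this]

lemma isUnit_one_sub_swap {m n : Type*} [Fintype m] [Fintype n] [DecidableEq m] [DecidableEq n]
    (X : Matrix m n ℂ) (Y : Matrix n m ℂ) (h : IsUnit (1 - Y * X)) :
    IsUnit (1 - X * Y) := by
  obtain ⟨Z, hZ1, hZ2⟩ : ∃ Z : Matrix n n ℂ, (1 - Y * X) * Z = 1 ∧ Z * (1 - Y * X) = 1 :=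
    ⟨↑h.unit⁻¹, by have := h.unit.mul_inv; rwa [h.unit_spec] at this,
      by have := h.unit.inv_mul; rwa [h.unit_spec] at this⟩
  have e1 : Y * X * Z = Z - 1 := by
    have := hZ1
    rw [sub_mul, one_mul] at this
    linear_combination (norm := noncomm_ring) -this
  have e2 : Z * (Y * X) = Z - 1 := by
    have := hZ2
    rw [mul_sub, mul_one] at this
    linear_combination (norm := noncomm_ring) -this
  refine ⟨⟨_, 1 + X * Z * Y, ?_, ?_⟩, rfl⟩
  · have : X * Y * (X * Z * Y) = X * Z * Y - X * Y := by
      calc X * Y * (X * Z * Y) = X * (Y * X * Z) * Y := by simp only [Matrix.mul_assoc]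
        _ = X * (Z - 1) * Y := by rw [e1]
        _ = X * Z * Y - X * Y := by rw [Matrix.mul_sub, Matrix.mul_one, Matrix.sub_mul]
    calc (1 - X * Y) * (1 + X * Z * Y)
        = 1 + X * Z * Y - X * Y - X * Y * (X * Z * Y) := by noncomm_ring
      _ = 1 := by rw [this]; abel
  · have : X * Z * Y * (X * Y) = X * Z * Y - X * Y := by
      calc X * Z * Y * (X * Y) = X * (Z * (Y * X)) * Y := by simp only [Matrix.mul_assoc]
        _ = X * (Z - 1) * Y := by rw [e2]
        _ = X * Z * Y - X * Y := by rw [Matrix.mul_sub, Matrix.mul_one, Matrix.sub_mul]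
    calc (1 + X * Z * Y) * (1 - X * Y)
        = 1 + X * Z * Y - X * Y - X * Z * Y * (X * Y) := by noncomm_ring
      _ = 1 := by rw [this]; abel

lemma isUnit_smul_one_sub_iff {p q : Type*} [Fintype p] [Fintype q] [DecidableEq p]
    [DecidableEq q] {k : ℂ} (hk0 : k ≠ 0) (U : Matrix p q ℂ) (V : Matrix q p ℂ) :
    IsUnit (k • (1 : Matrix p p ℂ) - U * V) ↔ IsUnit (1 - (k⁻¹ • U) * V) := by
  have h1 : k • (1 : Matrix p p ℂ) - U * V = (Units.mk0 k hk0) • (1 - (k⁻¹ • U) * V) := by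
    rw [Units.smul_mk0, Matrix.smul_mul, smul_sub, smul_smul, mul_inv_cancel₀ hk0]
    norm_num
  rw [h1, isUnit_smul_iff]

lemma spectrum_mul_comm_offzero {m n : Type*} [Fintype m] [Fintype n] [DecidableEq m]
    [DecidableEq n] (X : Matrix m n ℂ) (Y : Matrix n m ℂ) :
    spectrum ℂ (X * Y) \ {0} = spectrum ℂ (Y * X) \ {0} := by
  ext k
  simp only [Set.mem_diff, Set.mem_singleton_iff]
  constructor <;> rintro ⟨hk, hk0⟩ <;> refine ⟨?_, hk0⟩ <;>
    rw [spectrum.mem_iff, Algebra.algebraMap_eq_smul_one] at hk ⊢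
  · intro hu
    apply hk
    rw [isUnit_smul_one_sub_iff hk0] at hu ⊢
    rw [show (k⁻¹ • Y) * X = Y * (k⁻¹ • X) by rw [Matrix.smul_mul, ← Matrix.mul_smul]] at hu
    exact isUnit_one_sub_swap _ _ hu
  · intro hu
    apply hk
    rw [isUnit_smul_one_sub_iff hk0] at hu ⊢
    rw [show (k⁻¹ • X) * Y = X * (k⁻¹ • Y) by rw [Matrix.smul_mul, ← Matrix.mul_smul]] at hu
    exact isUnit_one_sub_swap _ _ hu

lemma spectralRadius_le_offzero {A B : Type*} [Ring A] [Algebra ℂ A]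
    [Ring B] [Algebra ℂ B] (a : A) (b : B)
    (h : spectrum ℂ a \ {0} ⊆ spectrum ℂ b \ {0}) :
    spectralRadius ℂ a ≤ spectralRadius ℂ b := by
  rw [spectralRadius, spectralRadius]
  refine iSup₂_le fun k hk => ?_
  by_cases hk0 : k = 0
  · simp [hk0]
  · have : k ∈ spectrum ℂ b := (h (Set.mem_diff_singleton.mpr ⟨hk, hk0⟩)).1
    exact le_iSup₂ (f := fun k (_ : k ∈ spectrum ℂ b) => (‖k‖₊ : ENNReal)) k this

lemma sprad_congr_offzero {m n : Type*} [Fintype m] [Fintype n] [DecidableEq m]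
    [DecidableEq n] (a : Matrix m m ℂ) (b : Matrix n n ℂ)
    (h : spectrum ℂ a \ {0} = spectrum ℂ b \ {0}) : sprad a = sprad b := by
  rw [sprad, sprad,
    le_antisymm (spectralRadius_le_offzero a b h.subset)
      (spectralRadius_le_offzero b a h.symm.subset)]

/-- The main dichotomy: the lifted product has the same spectral radius as the
scalar product for periodically extendable admissible sequences, and spectral
radius zero otherwise. -/
lemma lift_dichotomy {N d : ℕ} (ω : Matrix (Fin N) (Fin N) ℂ)
    (hω : ∀ a b, ω a b = 0 ∨ ω a b = 1)
    (A : Fin N → Matrix (Fin d) (Fin d) ℂ) (i : ℕ → Fin N) (m : ℕ) :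
    (PerAdm ω i (m + 1) →
      sprad (seqProd (fun k => liftA ω A (i k)) (m + 1)) =
        sprad (seqProd (fun k => A (i k)) (m + 1))) ∧
    (¬ PerAdm ω i (m + 1) →
      sprad (seqProd (fun k => liftA ω A (i k)) (m + 1)) = 0) := by
  set B := seqProd (fun k => A (i k)) (m + 1) with hB
  set u : Fin N → ℂ := fun j => ω j (i m) with hu
  set v : Fin N → ℂ := fun k => if k = i 0 then 1 else 0 with hv
  have hM : seqProd (fun k => liftA ω A (i k)) (m + 1) =
      ((∏ k ∈ Finset.range m, ω (i (k + 1)) (i k)) • vecMulVec u v) ⊗ₖ B := by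
    rw [show (fun k => liftA ω A (i k)) = fun k => OmegaM ω (i k) ⊗ₖ A (i k) from rfl,
      seqProd_kron, seqProd_OmegaM]
  have hsub1 : m + 1 - 1 = m := rfl
  by_cases htr : ∀ k, k < m → ω (i (k + 1)) (i k) = 1
  · have hc : (∏ k ∈ Finset.range m, ω (i (k + 1)) (i k)) = 1 :=
      Finset.prod_eq_one fun k hk => htr k (Finset.mem_range.mp hk)
    rw [hc, one_smul] at hM
    by_cases hper : ω (i 0) (i m) = 1
    · have hPer : PerAdm ω i (m + 1) :=
        ⟨⟨fun k hk => htr k (by omega), ⟨i 0, by rwa [hsub1]⟩⟩, by rwa [hsub1]⟩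
      refine ⟨fun _ => ?_, fun hcon => absurd hPer hcon⟩
      -- factor M = X * Y, B = Y * X
      set X : Matrix (Fin N × Fin d) (Fin d) ℂ :=
        Matrix.of fun p b => u p.1 * (1 : Matrix (Fin d) (Fin d) ℂ) p.2 b with hX
      set Y : Matrix (Fin d) (Fin N × Fin d) ℂ :=
        Matrix.of fun a p => v p.1 * B a p.2 with hY
      have hXY : X * Y = vecMulVec u v ⊗ₖ B := by
        ext ⟨j, a⟩ ⟨k, b⟩
        simp only [Matrix.mul_apply, hX, hY, Matrix.of_apply, Matrix.one_apply,
          Matrix.kroneckerMap_apply, vecMulVec_apply]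
        rw [Finset.sum_eq_single a]
        · simp; ring
        · intro c _ hca; simp [Ne.symm hca]
        · intro hca; exact absurd (Finset.mem_univ a) hca
      have hYX : Y * X = B := by
        ext a b
        simp only [Matrix.mul_apply, hX, hY, Matrix.of_apply, Matrix.one_apply]
        rw [Fintype.sum_prod_type]
        rw [Finset.sum_eq_single (i 0)]
        · simp only [hv, if_pos rfl, one_mul, hu]
          rw [Finset.sum_eq_single b]
          · simp [hper]
          · intro c _ hcb; simp [hcb]
          · intro hcb; exact absurd (Finset.mem_univ b) hcb
        · intro k _ hk0
          simp [hv, hk0]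
        · intro hk0; exact absurd (Finset.mem_univ (i 0)) hk0
      rw [hM, ← hXY]
      exact sprad_congr_offzero _ _ (by rw [spectrum_mul_comm_offzero, hYX])
    · have h0 : ω (i 0) (i m) = 0 := (hω _ _).resolve_right hper
      have hvu : v ⬝ᵥ u = 0 := by
        simp [hv, hu, dotProduct, ite_mul, h0]
      have hMM : seqProd (fun k => liftA ω A (i k)) (m + 1) *
          seqProd (fun k => liftA ω A (i k)) (m + 1) = 0 := by
        rw [hM, ← Matrix.mul_kronecker_mul, vecMulVec_mul_vecMulVec', hvu, zero_smul,
          Matrix.zero_kronecker]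
      refine ⟨fun hcon => ?_, fun _ => sprad_eq_zero_of_sq_zero _ hMM⟩
      exact absurd (hsub1 ▸ hcon.2) (by rw [h0]; exact zero_ne_one)
  · push_neg at htr
    obtain ⟨k, hkm, hk1⟩ := htr
    have hk0 : ω (i (k + 1)) (i k) = 0 := (hω _ _).resolve_right hk1
    have hc : (∏ j ∈ Finset.range m, ω (i (j + 1)) (i j)) = 0 :=
      Finset.prod_eq_zero (Finset.mem_range.mpr hkm) hk0
    rw [hc, zero_smul, Matrix.zero_kronecker] at hM
    have hMM : seqProd (fun k => liftA ω A (i k)) (m + 1) *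
        seqProd (fun k => liftA ω A (i k)) (m + 1) = 0 := by
      rw [hM, Matrix.zero_mul]
    refine ⟨fun hcon => absurd (hcon.1.1 k (by omega)) ?_,
      fun _ => sprad_eq_zero_of_sq_zero _ hMM⟩
    rw [hk0]; exact zero_ne_one

theorem stmt7 {N d : ℕ} (hN : 0 < N) (ω : Matrix (Fin N) (Fin N) ℂ)
    (hω : ∀ a b, ω a b = 0 ∨ ω a b = 1)
    (A : Fin N → Matrix (Fin d) (Fin d) ℂ) (n : ℕ) (hn : 1 ≤ n) :
    sSup {x : ℝ | ∃ i : ℕ → Fin N,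
        x = sprad (seqProd (fun k => liftA ω A (i k)) n) ^ ((1 : ℝ) / n)} =
      rhoHatPerMark ω A n := by
  obtain ⟨m, rfl⟩ : ∃ m, n = m + 1 := ⟨n - 1, (Nat.succ_pred_eq_of_pos hn).symm⟩
  have hni : (1 : ℝ) / ((m + 1 : ℕ) : ℝ) ≠ 0 := by
    push_cast
    positivity
  set f : (ℕ → Fin N) → ℝ :=
    fun i => sprad (seqProd (fun k => liftA ω A (i k)) (m + 1)) ^ ((1 : ℝ) / ((m + 1 : ℕ) : ℝ))
    with hf
  set g : (ℕ → Fin N) → ℝ :=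
    fun i => sprad (seqProd (fun k => A (i k)) (m + 1)) ^ ((1 : ℝ) / ((m + 1 : ℕ) : ℝ))
    with hg
  have hSdef : {x : ℝ | ∃ i : ℕ → Fin N,
      x = sprad (seqProd (fun k => liftA ω A (i k)) (m + 1)) ^ ((1 : ℝ) / ((m+1 : ℕ) : ℝ))} =
      {x : ℝ | ∃ i, x = f i} := rfl
  have hTdef : rhoHatPerMark ω A (m + 1) =
      sSup {x : ℝ | ∃ i, PerAdm ω i (m + 1) ∧ x = g i} := rfl
  rw [hSdef, hTdef]
  set S := {x : ℝ | ∃ i, x = f i} with hS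
  set T := {x : ℝ | ∃ i, PerAdm ω i (m + 1) ∧ x = g i} with hT
  have hf0 : ∀ i, 0 ≤ f i := fun i => Real.rpow_nonneg ENNReal.toReal_nonneg _
  have hg0 : ∀ i, 0 ≤ g i := fun i => Real.rpow_nonneg ENNReal.toReal_nonneg _
  have hd : ∀ i, (PerAdm ω i (m + 1) → f i = g i) ∧ (¬ PerAdm ω i (m + 1) → f i = 0) := by
    intro i
    obtain ⟨h1, h2⟩ := lift_dichotomy ω hω A i m
    exact ⟨fun h => by rw [hf, hg]; dsimp only; rw [h1 h],
      fun h => by rw [hf]; dsimp only; rw [h2 h, Real.zero_rpow hni]⟩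
  -- finiteness / boundedness
  have hmlt : ∀ k : ℕ, k % (m + 1) < m + 1 := fun k => Nat.mod_lt _ (Nat.succ_pos m)
  set emb : (Fin (m + 1) → Fin N) → (ℕ → Fin N) :=
    fun v k => v ⟨k % (m + 1), hmlt k⟩ with hemb
  have hembf : ∀ F : (Fin N → Matrix (Fin d) (Fin d) ℂ → Matrix (Fin d) (Fin d) ℂ), True := fun _ => trivial
  have hcongr : ∀ (i : ℕ → Fin N), f (emb fun t => i ↑t) = f i ∧ g (emb fun t => i ↑t) = g i := by
    intro i
    have hik : ∀ k, k < m + 1 → emb (fun t => i ↑t) k = i k := by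
      intro k hk
      simp only [hemb]
      congr 1
      exact Nat.mod_eq_of_lt hk
    constructor
    · rw [hf]; dsimp only
      rw [seqProd_congr (fun k hk => by rw [hik k hk])]
    · rw [hg]; dsimp only
      rw [seqProd_congr (fun k hk => by rw [hik k hk])]
  have hSfin : S.Finite := by
    refine Set.Finite.subset (Set.finite_range fun v => f (emb v)) ?_
    rintro x ⟨i, rfl⟩
    exact ⟨fun t => i ↑t, (hcongr i).1⟩
  have hTfin : T.Finite := by
    refine Set.Finite.subset (Set.finite_range fun v => g (emb v)) ?_
    rintro x ⟨i, _, rfl⟩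
    exact ⟨fun t => i ↑t, (hcongr i).2⟩
  have hbS : BddAbove S := hSfin.bddAbove
  have hbT : BddAbove T := hTfin.bddAbove
  have hSne : S.Nonempty := ⟨f fun _ => ⟨0, hN⟩, ⟨_, rfl⟩⟩
  have hT0 : 0 ≤ sSup T := by
    rcases T.eq_empty_or_nonempty with hTe | ⟨x, hx⟩
    · rw [hTe, Real.sSup_empty]
    · obtain ⟨i, hp, rfl⟩ := hx
      exact le_trans (hg0 i) (le_csSup hbT ⟨i, hp, rfl⟩)
  apply le_antisymm
  · refine csSup_le hSne ?_
    rintro x ⟨i, rfl⟩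
    by_cases hp : PerAdm ω i (m + 1)
    · rw [(hd i).1 hp]
      exact le_csSup hbT ⟨i, hp, rfl⟩
    · rw [(hd i).2 hp]
      exact hT0
  · rcases T.eq_empty_or_nonempty with hTe | hTne
    · rw [hTe, Real.sSup_empty]
      obtain ⟨x, i, rfl⟩ := hSne
      exact le_trans (hf0 i) (le_csSup hbS ⟨i, rfl⟩)
    · refine csSup_le hTne ?_
      rintro x ⟨i, hp, rfl⟩
      rw [← (hd i).1 hp]
      exact le_csSup hbS ⟨i, rfl⟩
end

section
/- If (i_1,…,i_n) is a sequence with ω_{i_{j+1} i_j} = 1 for all 1 ≤ j ≤ n−1 but ω_{i_1 i_n} = 0 (not periodically extendable), then the product A^{(i_n)} ⋯ A^{(i_1)} of lifted matrices is nilpotent, i.e., its spectral radius is 0. -/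
open Matrix Filter
open scoped Kronecker

lemma nil_spec {A : Type*} [Ring A] [Algebra ℂ A] {a : A} (h : IsNilpotent a)
    {k : ℂ} (hk : k ∈ spectrum ℂ a) : k = 0 := by
  by_contra hk0
  rw [spectrum.mem_iff] at hk
  apply hk
  have heq : algebraMap ℂ A k - a = k • (1 - k⁻¹ • a) := by
    rw [smul_sub, smul_smul, mul_inv_cancel₀ hk0, one_smul, Algebra.algebraMap_eq_smul_one]
  rw [heq, Algebra.smul_def]
  exact ((algebraMap ℂ A).isUnit_map (Ne.isUnit hk0)).mul ((h.smul _).isUnit_one_sub)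

lemma seqProd_lift {N d : ℕ} (ω : Matrix (Fin N) (Fin N) ℂ)
    (A : Fin N → Matrix (Fin d) (Fin d) ℂ) (i : ℕ → Fin N) (n : ℕ) :
    seqProd (fun k => liftA ω A (i k)) n =
      (seqProd (fun k => OmegaM ω (i k)) n) ⊗ₖ (seqProd (fun k => A (i k)) n) := by
  induction n with
  | zero => simp [seqProd, Matrix.one_kronecker_one]
  | succ n ih => rw [seqProd_succ, seqProd_succ, seqProd_succ, ih, liftA,
      ← Matrix.mul_kronecker_mul]

theorem stmt9 {N d : ℕ} (ω : Matrix (Fin N) (Fin N) ℂ)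
    (hω : ∀ a b, ω a b = 0 ∨ ω a b = 1)
    (A : Fin N → Matrix (Fin d) (Fin d) ℂ) (i : ℕ → Fin N) (n : ℕ) (hn : 1 ≤ n)
    (hadm : ∀ k, k + 1 < n → ω (i (k + 1)) (i k) = 1)
    (hnotper : ω (i 0) (i (n - 1)) = 0) :
    IsNilpotent (seqProd (fun k => liftA ω A (i k)) n) ∧
      spectralRadius ℂ (seqProd (fun k => liftA ω A (i k)) n) = 0 := by
  set P := seqProd (fun k => liftA ω A (i k)) n with hP
  have hB := seqProd_omega ω i n hn hadm
  have hB2 : seqProd (fun k => OmegaM ω (i k)) n * seqProd (fun k => OmegaM ω (i k)) n = 0 := by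
    rw [hB]
    ext j l
    simp only [Matrix.mul_apply, vecMulVec_apply, Matrix.zero_apply]
    rw [Finset.sum_eq_single (i 0)]
    · simp [hnotper]
    · intro b _ hb; simp [hb]
    · simp
  have hnil : IsNilpotent P := by
    refine ⟨2, ?_⟩
    rw [pow_two, hP, seqProd_lift, ← Matrix.mul_kronecker_mul, hB2, Matrix.zero_kronecker]
  refine ⟨hnil, ?_⟩
  rw [spectralRadius]
  refine le_antisymm (iSup₂_le fun k hk => ?_) zero_le
  simp [nil_spec hnil hk]
end

section
/- The four Markovian joint spectral radius variants coincide: limsup_n ρ^{(per)}_n(𝒜,Ω) = limsup_n ρ^{(∞)}_n(𝒜,Ω) = limsup_n ρ_n(𝒜,Ω) = limsup_n ρ^{(0)}_n(𝒜,Ω), assuming the Markovian Berger–Wang equality limsup_n ρ̂^{(per)}_n(𝒜,Ω) = limsup_n ρ_n(𝒜,Ω) (Dai's theorem). -/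
open Matrix Filter
open scoped Kronecker

lemma seqProd_one {α : Type*} [Monoid α] (A : ℕ → α) : seqProd A 1 = A 0 := by
  simp [seqProd, List.range_succ]

lemma sprad_nonneg {m : Type*} [Fintype m] [DecidableEq m] (M : Matrix m m ℂ) : 0 ≤ sprad M :=
  ENNReal.toReal_nonneg

lemma sprad_le_nrm {d : ℕ} (nrm : Matrix (Fin d) (Fin d) ℂ → ℝ)
    (hnn : ∀ M, 0 ≤ nrm M) (hdef : ∀ M, nrm M = 0 ↔ M = 0)
    (hsmul : ∀ (c : ℂ) M, nrm (c • M) = ‖c‖ * nrm M)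
    (hmul : ∀ M₁ M₂, nrm (M₁ * M₂) ≤ nrm M₁ * nrm M₂)
    (M : Matrix (Fin d) (Fin d) ℂ) : sprad M ≤ nrm M := by
  have key : ∀ k ∈ spectrum ℂ M, ‖k‖ ≤ nrm M := by
    intro k hk
    rw [spectrum.mem_iff] at hk
    rw [Matrix.isUnit_iff_isUnit_det, isUnit_iff_ne_zero, not_not] at hk
    obtain ⟨v, hv0, hv⟩ := Matrix.exists_mulVec_eq_zero_iff.mpr hk
    have hMv : M.mulVec v = k • v := by
      have : (algebraMap ℂ (Matrix (Fin d) (Fin d) ℂ) k).mulVec v - M.mulVec v = 0 := by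
        rw [← Matrix.sub_mulVec]; exact hv
      have h2 : (algebraMap ℂ (Matrix (Fin d) (Fin d) ℂ) k).mulVec v = k • v := by
        rw [Algebra.algebraMap_eq_smul_one, Matrix.smul_mulVec, Matrix.one_mulVec]
      rw [h2] at this
      exact (sub_eq_zero.mp this).symm
    set V : Matrix (Fin d) (Fin d) ℂ := Matrix.of (fun j _ => v j) with hV
    have hVne : V ≠ 0 := by
      intro h
      apply hv0
      funext j
      have := congrFun (congrFun h j) j
      simpa [hV] using this
    have hMV : M * V = k • V := by
      ext j l
      have := congrFun hMv j
      simpa [hV, Matrix.mul_apply, Matrix.mulVec, dotProduct] using this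
    have hpos : 0 < nrm V := lt_of_le_of_ne (hnn V) (fun h => hVne ((hdef V).mp h.symm))
    have : ‖k‖ * nrm V ≤ nrm M * nrm V := by
      calc ‖k‖ * nrm V = nrm (k • V) := (hsmul k V).symm
        _ = nrm (M * V) := by rw [hMV]
        _ ≤ nrm M * nrm V := hmul M V
    exact le_of_mul_le_mul_right this hpos
  have : spectralRadius ℂ M ≤ ENNReal.ofReal (nrm M) := by
    rw [spectralRadius]
    refine iSup₂_le fun k hk => ?_
    rw [← ENNReal.ofReal_coe_nnreal, coe_nnnorm]
    exact ENNReal.ofReal_le_ofReal (key k hk)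
  calc sprad M ≤ (ENNReal.ofReal (nrm M)).toReal :=
        ENNReal.toReal_mono ENNReal.ofReal_ne_top this
    _ = nrm M := ENNReal.toReal_ofReal (hnn M)

lemma perAdm_admInf {N : ℕ} {ω : Matrix (Fin N) (Fin N) ℂ} {i : ℕ → Fin N} {n : ℕ}
    (hn : 1 ≤ n) (h : PerAdm ω i n) : AdmInf ω i n := by
  refine ⟨fun k => i (k % n), fun k hk => ?_, fun k => ?_⟩
  · show i (k % n) = i k
    rw [Nat.mod_eq_of_lt hk]
  · show ω (i ((k + 1) % n)) (i (k % n)) = 1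
    have hkn : k % n < n := Nat.mod_lt _ hn
    rcases lt_or_eq_of_le (Nat.succ_le_of_lt hkn) with hlt | heq
    · have h1 : k + 1 = (k % n + 1) + n * (k / n) := by
        have := Nat.mod_add_div k n; omega
      rw [h1, Nat.add_mul_mod_self_left, Nat.mod_eq_of_lt hlt]
      exact h.1.1 (k % n) hlt
    · have hdvd : n ∣ k + 1 := by
        refine ⟨k / n + 1, ?_⟩
        have := Nat.mod_add_div k n
        rw [Nat.mul_add, Nat.mul_one]
        omega
      have h0 : (k + 1) % n = 0 := Nat.dvd_iff_mod_eq_zero.mp hdvd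
      have h2 : k % n = n - 1 := by omega
      rw [h0, h2]
      exact h.2

lemma admInf_adm {N : ℕ} {ω : Matrix (Fin N) (Fin N) ℂ} {i : ℕ → Fin N} {n : ℕ}
    (hn : 1 ≤ n) (h : AdmInf ω i n) : Adm ω i n := by
  obtain ⟨j, hj, hstep⟩ := h
  constructor
  · intro k hk
    rw [← hj (k + 1) hk, ← hj k (by omega)]
    exact hstep k
  · refine ⟨j n, ?_⟩
    have := hstep (n - 1)
    rw [show n - 1 + 1 = n by omega] at this
    rw [← hj (n - 1) (by omega)]
    exact this

lemma admZero_trunc {N : ℕ} {ω : Matrix (Fin N) (Fin N) ℂ} {i : ℕ → Fin N} {n : ℕ}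
    (hn : 2 ≤ n) (h : AdmZero ω i n) : Adm ω i (n - 1) := by
  constructor
  · intro k hk; exact h k (by omega)
  · refine ⟨i (n - 1), ?_⟩
    have := h (n - 2) (by omega)
    rw [show n - 2 + 1 = n - 1 by omega] at this
    rw [show n - 1 - 1 = n - 2 by omega]
    exact this

theorem stmt15 {N d : ℕ} (ω : Matrix (Fin N) (Fin N) ℂ)
    (hω : ∀ a b, ω a b = 0 ∨ ω a b = 1) (nrm : Matrix (Fin d) (Fin d) ℂ → ℝ)
    (hnn : ∀ M, 0 ≤ nrm M) (hdef : ∀ M, nrm M = 0 ↔ M = 0)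
    (hadd : ∀ M₁ M₂, nrm (M₁ + M₂) ≤ nrm M₁ + nrm M₂)
    (hsmul : ∀ (c : ℂ) M, nrm (c • M) = ‖c‖ * nrm M)
    (hmul : ∀ M₁ M₂, nrm (M₁ * M₂) ≤ nrm M₁ * nrm M₂)
    (A : Fin N → Matrix (Fin d) (Fin d) ℂ)
    (hDai : Filter.limsup (fun n => rhoHatPerMark ω A n) Filter.atTop =
      Filter.limsup (fun n => rhoMark nrm ω A n) Filter.atTop) :
    Filter.limsup (fun n => rhoPerMark nrm ω A n) Filter.atTop =
        Filter.limsup (fun n => rhoMark nrm ω A n) Filter.atTop ∧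
      Filter.limsup (fun n => rhoInfMark nrm ω A n) Filter.atTop =
        Filter.limsup (fun n => rhoMark nrm ω A n) Filter.atTop ∧
      Filter.limsup (fun n => rhoZeroMark nrm ω A n) Filter.atTop =
        Filter.limsup (fun n => rhoMark nrm ω A n) Filter.atTop := by
  rcases Nat.eq_zero_or_pos N with hN | hN
  · subst hN
    have hsup0 : ∀ s : Set ℝ, (∀ x ∈ s, False) → sSup s = 0 := by
      intro s hs
      rw [Set.eq_empty_iff_forall_notMem.mpr hs, Real.sSup_empty]
    have e1 : ∀ n, rhoPerMark nrm ω A n = 0 := by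
      intro n; simp only [rhoPerMark]
      exact hsup0 _ (by rintro x ⟨i, hi⟩; exact (i 0).elim0)
    have e2 : ∀ n, rhoMark nrm ω A n = 0 := by
      intro n; simp only [rhoMark]
      exact hsup0 _ (by rintro x ⟨i, hi⟩; exact (i 0).elim0)
    have e3 : ∀ n, rhoInfMark nrm ω A n = 0 := by
      intro n; simp only [rhoInfMark]
      exact hsup0 _ (by rintro x ⟨i, hi⟩; exact (i 0).elim0)
    have e4 : ∀ n, rhoZeroMark nrm ω A n = 0 := by
      intro n; simp only [rhoZeroMark]
      exact hsup0 _ (by rintro x ⟨i, hi⟩; exact (i 0).elim0)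
    refine ⟨?_, ?_, ?_⟩ <;> simp only [e1, e2, e3, e4]
  -- main case : N ≥ 1
  haveI : Nonempty (Fin N) := ⟨⟨0, hN⟩⟩
  set α : ℝ := max 1 (Finset.univ.sup' Finset.univ_nonempty fun i => nrm (A i)) with hαdef
  have hα1 : (1:ℝ) ≤ α := le_max_left _ _
  have hα0 : (0:ℝ) < α := lt_of_lt_of_le zero_lt_one hα1
  have hαA : ∀ i, nrm (A i) ≤ α := fun i =>
    le_trans (Finset.le_sup' (fun i => nrm (A i)) (Finset.mem_univ i)) (le_max_right _ _)
  have hprod : ∀ (i : ℕ → Fin N) (n : ℕ), 1 ≤ n →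
      nrm (seqProd (fun k => A (i k)) n) ≤ α ^ n := by
    intro i n hn
    induction n with
    | zero => omega
    | succ m ih =>
      rcases Nat.eq_zero_or_pos m with hm | hm
      · subst hm
        rw [seqProd_one]
        simpa using hαA (i 0)
      · rw [seqProd_succ, pow_succ']
        exact le_trans (hmul _ _)
          (mul_le_mul (hαA _) (ih hm) (hnn _) (le_of_lt hα0))
  have hel : ∀ (i : ℕ → Fin N) (n : ℕ),
      nrm (seqProd (fun k => A (i k)) n) ^ ((1:ℝ)/(n:ℝ)) ≤ α := by
    intro i n
    rcases Nat.eq_zero_or_pos n with h0 | h1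
    · subst h0
      simpa [Real.rpow_zero] using hα1
    · have hcalc : ((α ^ n : ℝ)) ^ ((1:ℝ)/(n:ℝ)) = α := by
        rw [← Real.rpow_natCast α n, ← Real.rpow_mul (le_of_lt hα0), mul_one_div,
          div_self (Nat.cast_ne_zero.mpr (by omega)), Real.rpow_one]
      calc nrm (seqProd (fun k => A (i k)) n) ^ ((1:ℝ)/(n:ℝ))
          ≤ ((α ^ n : ℝ)) ^ ((1:ℝ)/(n:ℝ)) :=
            Real.rpow_le_rpow (hnn _) (hprod i n h1) (by positivity)
        _ = α := hcalc
  -- bddAbove of the index sets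
  have bdd_mark : ∀ n, BddAbove {x : ℝ | ∃ i : ℕ → Fin N, Adm ω i n ∧
      x = nrm (seqProd (fun k => A (i k)) n) ^ ((1 : ℝ) / n)} := by
    intro n
    exact ⟨α, by rintro x ⟨i, hi, rfl⟩; exact hel i n⟩
  have bdd_per : ∀ n, BddAbove {x : ℝ | ∃ i : ℕ → Fin N, PerAdm ω i n ∧
      x = nrm (seqProd (fun k => A (i k)) n) ^ ((1 : ℝ) / n)} := by
    intro n
    exact ⟨α, by rintro x ⟨i, hi, rfl⟩; exact hel i n⟩
  have bdd_inf : ∀ n, BddAbove {x : ℝ | ∃ i : ℕ → Fin N, AdmInf ω i n ∧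
      x = nrm (seqProd (fun k => A (i k)) n) ^ ((1 : ℝ) / n)} := by
    intro n
    exact ⟨α, by rintro x ⟨i, hi, rfl⟩; exact hel i n⟩
  -- nonnegativity and boundedness of the rho functions
  have n_mark : ∀ n, 0 ≤ rhoMark nrm ω A n := fun n => by
    simp only [rhoMark]
    exact Real.sSup_nonneg (by rintro x ⟨i, hi, rfl⟩; exact Real.rpow_nonneg (hnn _) _)
  have n_per : ∀ n, 0 ≤ rhoPerMark nrm ω A n := fun n => by
    simp only [rhoPerMark]
    exact Real.sSup_nonneg (by rintro x ⟨i, hi, rfl⟩; exact Real.rpow_nonneg (hnn _) _)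
  have n_inf : ∀ n, 0 ≤ rhoInfMark nrm ω A n := fun n => by
    simp only [rhoInfMark]
    exact Real.sSup_nonneg (by rintro x ⟨i, hi, rfl⟩; exact Real.rpow_nonneg (hnn _) _)
  have n_zero : ∀ n, 0 ≤ rhoZeroMark nrm ω A n := fun n => by
    simp only [rhoZeroMark]
    exact Real.sSup_nonneg (by rintro x ⟨i, hi, rfl⟩; exact Real.rpow_nonneg (hnn _) _)
  have n_hat : ∀ n, 0 ≤ rhoHatPerMark ω A n := fun n => by
    simp only [rhoHatPerMark]
    exact Real.sSup_nonneg (by rintro x ⟨i, hi, rfl⟩; exact Real.rpow_nonneg (sprad_nonneg _) _)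
  have b_mark : ∀ n, rhoMark nrm ω A n ≤ α := fun n => by
    simp only [rhoMark]
    exact Real.sSup_le (by rintro x ⟨i, hi, rfl⟩; exact hel i n) hα0.le
  have b_per : ∀ n, rhoPerMark nrm ω A n ≤ α := fun n => by
    simp only [rhoPerMark]
    exact Real.sSup_le (by rintro x ⟨i, hi, rfl⟩; exact hel i n) hα0.le
  have b_inf : ∀ n, rhoInfMark nrm ω A n ≤ α := fun n => by
    simp only [rhoInfMark]
    exact Real.sSup_le (by rintro x ⟨i, hi, rfl⟩; exact hel i n) hα0.le
  have b_zero : ∀ n, rhoZeroMark nrm ω A n ≤ α := fun n => by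
    simp only [rhoZeroMark]
    exact Real.sSup_le (by rintro x ⟨i, hi, rfl⟩; exact hel i n) hα0.le
  have b_hat : ∀ n, rhoHatPerMark ω A n ≤ α := fun n => by
    simp only [rhoHatPerMark]
    refine Real.sSup_le ?_ hα0.le
    rintro x ⟨i, hi, rfl⟩
    refine le_trans (Real.rpow_le_rpow (sprad_nonneg _)
      (sprad_le_nrm nrm hnn hdef hsmul hmul _) (by positivity)) (hel i n)
  -- pointwise comparisons
  have hat_le_per : ∀ n, rhoHatPerMark ω A n ≤ rhoPerMark nrm ω A n := fun n => by
    simp only [rhoHatPerMark, rhoPerMark]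
    refine Real.sSup_le ?_ (n_per n)
    rintro x ⟨i, hi, rfl⟩
    refine le_trans (Real.rpow_le_rpow (sprad_nonneg _)
      (sprad_le_nrm nrm hnn hdef hsmul hmul _) (by positivity)) ?_
    exact le_csSup (bdd_per n) ⟨i, hi, rfl⟩
  have per_le_inf : ∀ n, 1 ≤ n → rhoPerMark nrm ω A n ≤ rhoInfMark nrm ω A n := fun n hn => by
    simp only [rhoPerMark, rhoInfMark]
    refine Real.sSup_le ?_ (n_inf n)
    rintro x ⟨i, hi, rfl⟩
    exact le_csSup (bdd_inf n) ⟨i, perAdm_admInf hn hi, rfl⟩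
  have inf_le_mark : ∀ n, 1 ≤ n → rhoInfMark nrm ω A n ≤ rhoMark nrm ω A n := fun n hn => by
    simp only [rhoInfMark, rhoMark]
    refine Real.sSup_le ?_ (n_mark n)
    rintro x ⟨i, hi, rfl⟩
    exact le_csSup (bdd_mark n) ⟨i, admInf_adm hn hi, rfl⟩
  have mark_le_zero : ∀ n, rhoMark nrm ω A n ≤ rhoZeroMark nrm ω A n := fun n => by
    simp only [rhoMark, rhoZeroMark]
    refine Real.sSup_le ?_ (n_zero n)
    rintro x ⟨i, hi, rfl⟩
    refine le_csSup ⟨α, by rintro y ⟨j, hj, rfl⟩; exact hel j n⟩ ⟨i, hi.1, rfl⟩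
  -- limsup boilerplate
  have hBU : ∀ f : ℕ → ℝ, (∀ n, f n ≤ α) → IsBoundedUnder (· ≤ ·) atTop f :=
    fun f h => isBoundedUnder_of ⟨α, h⟩
  have hCB : ∀ f : ℕ → ℝ, (∀ n, 0 ≤ f n) → IsCoboundedUnder (· ≤ ·) atTop f :=
    fun f h => isCoboundedUnder_le_of_le atTop h
  set L := Filter.limsup (fun n => rhoMark nrm ω A n) Filter.atTop with hLdef
  have hL0 : (0:ℝ) ≤ L :=
    le_limsup_of_frequently_le ((Eventually.of_forall n_mark).frequently) (hBU _ b_mark)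
  have c1 : Filter.limsup (fun n => rhoHatPerMark ω A n) Filter.atTop ≤
      Filter.limsup (fun n => rhoPerMark nrm ω A n) Filter.atTop :=
    limsup_le_limsup (Eventually.of_forall hat_le_per) (hCB _ n_hat) (hBU _ b_per)
  have c2 : Filter.limsup (fun n => rhoPerMark nrm ω A n) Filter.atTop ≤
      Filter.limsup (fun n => rhoInfMark nrm ω A n) Filter.atTop :=
    limsup_le_limsup ((eventually_ge_atTop 1).mono per_le_inf) (hCB _ n_per) (hBU _ b_inf)
  have c3 : Filter.limsup (fun n => rhoInfMark nrm ω A n) Filter.atTop ≤ L :=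
    limsup_le_limsup ((eventually_ge_atTop 1).mono inf_le_mark) (hCB _ n_inf) (hBU _ b_mark)
  have c4 : L ≤ Filter.limsup (fun n => rhoZeroMark nrm ω A n) Filter.atTop :=
    limsup_le_limsup (Eventually.of_forall mark_le_zero) (hCB _ n_mark) (hBU _ b_zero)
  have c0 : L ≤ Filter.limsup (fun n => rhoPerMark nrm ω A n) Filter.atTop := by
    rw [← hDai]; exact c1
  -- the hard part: limsup rhoZero ≤ L
  have hzero_le : Filter.limsup (fun n => rhoZeroMark nrm ω A n) Filter.atTop ≤ L := by
    refine le_of_forall_pos_le_add fun ε hε => ?_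
    set c : ℝ := L + ε/2 with hcdef
    have hc : 0 < c := by
      rw [hcdef]; linarith
    have hev : ∀ᶠ m : ℕ in atTop, rhoMark nrm ω A m < c :=
      eventually_lt_of_limsup_lt (by rw [hcdef]; rw [← hLdef]; linarith) (hBU _ b_mark)
    obtain ⟨m0, hm0⟩ := eventually_atTop.mp hev
    -- tendsto of the dominating sequence
    have e_t : Tendsto (fun n : ℕ => (((n - 1 : ℕ)):ℝ)/(n:ℝ)) atTop (nhds 1) := by
      have h1 : Tendsto (fun n : ℕ => 1 - 1/(n:ℝ)) atTop (nhds 1) := by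
        have h2 := tendsto_one_div_atTop_nhds_zero_nat (𝕜 := ℝ)
        simpa using tendsto_const_nhds.sub h2
      refine h1.congr' ?_
      filter_upwards [eventually_ge_atTop 1] with n hn
      have hn0 : (n:ℝ) ≠ 0 := Nat.cast_ne_zero.mpr (by omega)
      rw [Nat.cast_sub hn]
      push_cast
      field_simp
    have t1 : Tendsto (fun n : ℕ => α ^ ((1:ℝ)/(n:ℝ))) atTop (nhds 1) := by
      have h2 : Tendsto (fun n : ℕ => Real.exp (Real.log α * ((1:ℝ)/(n:ℝ)))) atTop
          (nhds (Real.exp (Real.log α * 0))) :=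
        (Real.continuous_exp.tendsto _).comp
          (tendsto_one_div_atTop_nhds_zero_nat.const_mul (Real.log α))
      simp only [mul_zero, Real.exp_zero] at h2
      exact h2.congr fun n => (Real.rpow_def_of_pos hα0 _).symm
    have t2 : Tendsto (fun n : ℕ => c ^ ((((n - 1 : ℕ)):ℝ)/(n:ℝ))) atTop (nhds c) := by
      have h2 : Tendsto (fun n : ℕ => Real.exp (Real.log c * ((((n - 1 : ℕ)):ℝ)/(n:ℝ)))) atTop
          (nhds (Real.exp (Real.log c * 1))) :=
        (Real.continuous_exp.tendsto _).comp (e_t.const_mul (Real.log c))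
      simp only [mul_one, Real.exp_log hc] at h2
      exact h2.congr fun n => (Real.rpow_def_of_pos hc _).symm
    have t3 : Tendsto (fun n : ℕ => α ^ ((1:ℝ)/(n:ℝ)) * c ^ ((((n - 1 : ℕ)):ℝ)/(n:ℝ)))
        atTop (nhds c) := by
      have := t1.mul t2
      simpa using this
    have hclt : c < L + ε := by rw [hcdef]; linarith
    have hevg : ∀ᶠ n : ℕ in atTop,
        α ^ ((1:ℝ)/(n:ℝ)) * c ^ ((((n - 1 : ℕ)):ℝ)/(n:ℝ)) < L + ε :=
      t3.eventually_lt_const hclt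
    have hbd : ∀ᶠ n : ℕ in atTop, rhoZeroMark nrm ω A n ≤
        α ^ ((1:ℝ)/(n:ℝ)) * c ^ ((((n - 1 : ℕ)):ℝ)/(n:ℝ)) := by
      filter_upwards [eventually_ge_atTop (m0 + 2)] with n hn
      have hn2 : 2 ≤ n := by omega
      have hM : rhoMark nrm ω A (n - 1) < c := hm0 (n - 1) (by omega)
      simp only [rhoMark] at hM
      simp only [rhoZeroMark]
      refine Real.sSup_le ?_
        (mul_nonneg (Real.rpow_nonneg hα0.le _) (Real.rpow_nonneg hc.le _))
      rintro x ⟨i, hi, rfl⟩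
      have hne1 : ((n - 1 : ℕ):ℝ) ≠ 0 := Nat.cast_ne_zero.mpr (by omega)
      have hne2 : (n:ℝ) ≠ 0 := Nat.cast_ne_zero.mpr (by omega)
      have hexp : (1:ℝ)/(n:ℝ) = ((1:ℝ)/((n - 1 : ℕ):ℝ)) * (((n - 1 : ℕ):ℝ)/(n:ℝ)) := by
        have h3 : ((n:ℝ) - 1) ≠ 0 := by
          have h4 : (2:ℝ) ≤ (n:ℝ) := by exact_mod_cast hn2
          intro h
          linarith
        field_simp
      have hPle : nrm (seqProd (fun k => A (i k)) (n - 1)) ^ ((1:ℝ)/((n - 1 : ℕ):ℝ)) ≤ c := by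
        have hmem : nrm (seqProd (fun k => A (i k)) (n - 1)) ^ ((1:ℝ)/((n - 1 : ℕ):ℝ)) ∈
            {x : ℝ | ∃ i : ℕ → Fin N, Adm ω i (n - 1) ∧
              x = nrm (seqProd (fun k => A (i k)) (n - 1)) ^ ((1 : ℝ) / (n - 1 : ℕ))} :=
          ⟨i, admZero_trunc hn2 hi, rfl⟩
        exact (le_csSup (bdd_mark (n - 1)) hmem).trans hM.le
      have hQ : seqProd (fun k => A (i k)) n =
          A (i (n - 1)) * seqProd (fun k => A (i k)) (n - 1) := by
        conv_lhs => rw [show n = n - 1 + 1 by omega]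
        rw [seqProd_succ]
      have hQle : nrm (seqProd (fun k => A (i k)) n) ≤
          α * nrm (seqProd (fun k => A (i k)) (n - 1)) := by
        rw [hQ]
        exact le_trans (hmul _ _) (mul_le_mul_of_nonneg_right (hαA _) (hnn _))
      calc nrm (seqProd (fun k => A (i k)) n) ^ ((1:ℝ)/(n:ℝ))
          ≤ (α * nrm (seqProd (fun k => A (i k)) (n - 1))) ^ ((1:ℝ)/(n:ℝ)) :=
            Real.rpow_le_rpow (hnn _) hQle (by positivity)
        _ = α ^ ((1:ℝ)/(n:ℝ)) * nrm (seqProd (fun k => A (i k)) (n - 1)) ^ ((1:ℝ)/(n:ℝ)) :=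
            Real.mul_rpow hα0.le (hnn _)
        _ = α ^ ((1:ℝ)/(n:ℝ)) * (nrm (seqProd (fun k => A (i k)) (n - 1)) ^
              ((1:ℝ)/((n - 1 : ℕ):ℝ))) ^ (((n - 1 : ℕ):ℝ)/(n:ℝ)) := by
            rw [← Real.rpow_mul (hnn _), ← hexp]
        _ ≤ α ^ ((1:ℝ)/(n:ℝ)) * c ^ (((n - 1 : ℕ):ℝ)/(n:ℝ)) := by
            refine mul_le_mul_of_nonneg_left ?_ (Real.rpow_nonneg hα0.le _)
            exact Real.rpow_le_rpow (Real.rpow_nonneg (hnn _) _) hPle (by positivity)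
    refine limsup_le_of_le (hCB _ n_zero) ?_
    filter_upwards [hbd, hevg] with n h1 h2
    exact h1.trans h2.le
  refine ⟨le_antisymm (c2.trans c3) c0, le_antisymm c3 (c0.trans c2), le_antisymm hzero_le c4⟩
end
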